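/- arXiv:2404.11448 — 2 statements merged into one kernel-verified Lean document; each statement's English description precedes it below -/
import Mathlib

section
/- Let ν be even, c_m = cos(mπ/(ν+1)) for 0 ≤ m ≤ ν+1, and let C be the (ν+2)×(ν+2) matrix C_{mk} = T_k(c_m). The vectors y₁ = (1/2, 1, 1, …, 1, 1/2) and y₂ = (1/2, -1, 1, -1, …, 1, -1/2) satisfy (C y_j)_m = 0 for all 1 ≤ m ≤ ν and j = 1, 2. -/
open Polynomial Polynomial.Chebyshev Real Finset

private lemma cos_nat_pi (k : ℕ) : Real.cos ((k : ℝ) * π) = (-1 : ℝ) ^ k := by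
  simpa using Real.cos_nat_mul_pi_sub 0 k

private lemma key_sum (ν : ℕ) (φ : ℝ) (hs : Real.sin φ ≠ 0)
    (h0 : Real.sin (((ν : ℝ) + 1) * φ) = 0) :
    1/2 + (∑ k ∈ Finset.range ν, Real.cos (((k : ℝ) + 1) * φ))
      + Real.cos (((ν : ℝ) + 1) * φ) / 2 = 0 := by
  set f : ℕ → ℝ := fun k => Real.sin ((k : ℝ) * φ) + Real.sin (((k : ℝ) + 1) * φ) with hf
  have htel := Finset.sum_range_sub f ν
  have hterm : ∀ k : ℕ, f (k + 1) - f k = 2 * Real.sin φ * Real.cos (((k : ℝ) + 1) * φ) := by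
    intro k
    have h := Real.sin_sub_sin (((k : ℝ) + 2) * φ) ((k : ℝ) * φ)
    have e1 : ((((k : ℝ) + 2) * φ - (k : ℝ) * φ) / 2) = φ := by ring
    have e2 : ((((k : ℝ) + 2) * φ + (k : ℝ) * φ) / 2) = ((k : ℝ) + 1) * φ := by ring
    rw [e1, e2] at h
    simp only [hf]
    push_cast
    have e3 : ((k : ℝ) + 1 + 1) * φ = ((k : ℝ) + 2) * φ := by ring
    rw [e3]
    linarith
  have hsum : Real.sin φ * (2 * ∑ k ∈ Finset.range ν, Real.cos (((k : ℝ) + 1) * φ))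
      = f ν - f 0 := by
    rw [← htel]
    simp only [Finset.mul_sum]
    refine Finset.sum_congr rfl fun k _ => ?_
    rw [hterm k]; ring
  have hν : Real.sin ((ν : ℝ) * φ) = -Real.cos (((ν : ℝ) + 1) * φ) * Real.sin φ := by
    have e : (ν : ℝ) * φ = ((ν : ℝ) + 1) * φ - φ := by ring
    rw [e, Real.sin_sub, h0]; ring
  have hfν : f ν - f 0 = Real.sin φ * (-(Real.cos (((ν : ℝ) + 1) * φ)) - 1) := by
    simp only [hf, Nat.cast_zero, zero_mul, Real.sin_zero, zero_add, h0, hν]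
    ring
  rw [hfν] at hsum
  have := mul_left_cancel₀ hs hsum
  linarith

/-- For `ν` even, the vectors `y₁ = (1/2, 1, …, 1, 1/2)` and
`y₂ = (1/2, -1, 1, …, 1, -1/2)` are annihilated by the middle rows `1 ≤ m ≤ ν` of the
collocation matrix `C_{mk} = T_k(cos(mπ/(ν+1)))`. -/
theorem stmt_9 (ν : ℕ) (hν : 0 < ν) (hνe : Even ν)
    (y₁ y₂ : ℕ → ℝ)
    (hy₁ : ∀ n ≤ ν + 1, y₁ n = if n = 0 ∨ n = ν + 1 then 1/2 else 1)
    (hy₂ : ∀ n ≤ ν + 1, y₂ n = (-1 : ℝ) ^ n * (if n = 0 ∨ n = ν + 1 then 1/2 else 1)) :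
    ∀ m : ℕ, 1 ≤ m → m ≤ ν →
      (∑ k ∈ range (ν + 2), (T ℝ k).eval (Real.cos (m * π / (ν + 1))) * y₁ k) = 0 ∧
      (∑ k ∈ range (ν + 2), (T ℝ k).eval (Real.cos (m * π / (ν + 1))) * y₂ k) = 0 := by
  intro m hm1 hm2
  set θ : ℝ := m * π / (ν + 1) with hθ
  have hνpos : (0 : ℝ) < (ν : ℝ) + 1 := by positivity
  have hθπ : ((ν : ℝ) + 1) * θ = m * π := by
    rw [hθ]; field_simp
  have hmpos : (0 : ℝ) < (m : ℝ) := by exact_mod_cast hm1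
  have hπ := Real.pi_pos
  have hsin : Real.sin θ ≠ 0 := by
    apply ne_of_gt
    apply Real.sin_pos_of_pos_of_lt_pi
    · rw [hθ]; positivity
    · rw [hθ, div_lt_iff₀ hνpos]
      have hmlt : (m : ℝ) < (ν : ℝ) + 1 := by exact_mod_cast Nat.lt_succ_of_le hm2
      nlinarith
  have h0 : Real.sin (((ν : ℝ) + 1) * θ) = 0 := by
    rw [hθπ]; exact Real.sin_nat_mul_pi m
  have hT : ∀ k : ℕ, (T ℝ k).eval (Real.cos θ) = Real.cos ((k : ℝ) * θ) := by
    intro k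
    exact_mod_cast Polynomial.Chebyshev.T_real_cos θ (k : ℤ)
  have hflip : ∀ k : ℕ, Real.cos ((k : ℝ) * (θ + π)) = (-1 : ℝ) ^ k * Real.cos ((k : ℝ) * θ) := by
    intro k
    rw [mul_add, Real.cos_add, Real.sin_nat_mul_pi, cos_nat_pi]
    ring
  constructor
  · rw [Finset.sum_range_succ, Finset.sum_range_succ']
    have hmid : ∀ k ∈ Finset.range ν,
        (T ℝ (k + 1 : ℕ)).eval (Real.cos θ) * y₁ (k + 1) = Real.cos (((k : ℝ) + 1) * θ) := by
      intro k hk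
      simp only [Finset.mem_range] at hk
      rw [hy₁ (k + 1) (by omega), if_neg (by omega), hT, mul_one]
      push_cast; ring_nf
    rw [Finset.sum_congr rfl hmid, hy₁ 0 (by omega), hy₁ (ν + 1) le_rfl,
      if_pos (Or.inl rfl), if_pos (Or.inr rfl), hT, hT]
    have hk := key_sum ν θ hsin h0
    push_cast
    simp only [zero_mul, Real.cos_zero]
    linarith
  · rw [Finset.sum_range_succ, Finset.sum_range_succ']
    have hsin' : Real.sin (θ + π) ≠ 0 := by
      rw [Real.sin_add_pi]; simpa using hsin
    have h0' : Real.sin (((ν : ℝ) + 1) * (θ + π)) = 0 := by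
      have e : ((ν : ℝ) + 1) * (θ + π) = ((m + ν + 1 : ℕ) : ℝ) * π := by
        push_cast; linear_combination hθπ
      rw [e]; exact Real.sin_nat_mul_pi _
    have hmid : ∀ k ∈ Finset.range ν,
        (T ℝ (k + 1 : ℕ)).eval (Real.cos θ) * y₂ (k + 1) = Real.cos (((k : ℝ) + 1) * (θ + π)) := by
      intro k hk
      simp only [Finset.mem_range] at hk
      rw [hy₂ (k + 1) (by omega), if_neg (by omega), hT]
      have := hflip (k + 1)
      push_cast at this ⊢
      rw [this]; ring
    rw [Finset.sum_congr rfl hmid, hy₂ 0 (by omega), hy₂ (ν + 1) le_rfl,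
      if_pos (Or.inl rfl), if_pos (Or.inr rfl), hT, hT]
    have hk := key_sum ν (θ + π) hsin' h0'
    have htop := hflip (ν + 1)
    push_cast at htop ⊢
    simp only [zero_mul, Real.cos_zero]
    rw [← sub_eq_zero] at htop ⊢
    nlinarith [htop, hk]
end

section
/- Let ν ≥ 1, d ≥ 1 with ν ≥ d+1, and let B be an infinite lower-bandwidth-(d+1) matrix (B_{kn} = 0 for |k−n| > d+1). Define B̃ on indices 0 ≤ n, m ≤ ν+1 by B̃_{nm} = B_{nm} for 0 ≤ n < ν−d or n = ν+1, and B̃_{nm} = B_{nm} + B_{(2ν+2−n),m} for ν−d ≤ n ≤ ν. Then for all 0 ≤ m, n ≤ ν+1, Σ_{k=0}^{∞} T_k(c_m) B_{kn} = Σ_{k=0}^{ν+1} T_k(c_m) B̃_{kn}, where c_m = cos(mπ/(ν+1)). -/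
open Polynomial Polynomial.Chebyshev Real Finset

/-- Folding a banded infinite Chebyshev-coefficient matrix `B` onto `(ν+2)` rows: with
`B̃_{nm} = B_{nm}` for `0 ≤ n < ν-d` or `n = ν+1` and `B̃_{nm} = B_{nm} + B_{2ν+2-n,m}`
for `ν-d ≤ n ≤ ν`, one has `Σ_{k=0}^∞ T_k(c_m) B_{kn} = Σ_{k=0}^{ν+1} T_k(c_m) B̃_{kn}`
at the Clenshaw–Curtis points `c_m = cos(mπ/(ν+1))`. -/
theorem stmt_16 (ν d : ℕ) (hd : 1 ≤ d) (hν : d + 1 ≤ ν)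
    (B Bt : ℕ → ℕ → ℝ)
    (hband : ∀ k n : ℕ, ((d : ℤ) + 1) < |(k : ℤ) - (n : ℤ)| → B k n = 0)
    (hBt1 : ∀ n m : ℕ, (n < ν - d ∨ n = ν + 1) → Bt n m = B n m)
    (hBt2 : ∀ n m : ℕ, ν - d ≤ n → n ≤ ν → Bt n m = B n m + B (2 * ν + 2 - n) m) :
    ∀ m n : ℕ, m ≤ ν + 1 → n ≤ ν + 1 →
      (∑' k : ℕ, (T ℝ k).eval (Real.cos (m * π / (ν + 1))) * B k n) =
        ∑ k ∈ range (ν + 2), (T ℝ k).eval (Real.cos (m * π / (ν + 1))) * Bt k n := by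
  intro m n hm hn
  set θ : ℝ := (m : ℝ) * π / (ν + 1) with hθ
  have hν1 : ((ν : ℝ) + 1) ≠ 0 := by positivity
  have hB0 : ∀ k : ℕ, n + d + 1 < k → B k n = 0 := by
    intro k hk
    apply hband
    have h1 : ((d : ℤ) + 1) < (k : ℤ) - n := by push_cast; omega
    exact lt_of_lt_of_le h1 (le_abs_self _)
  have hrefl : ∀ l : ℕ, l ≤ 2 * ν + 2 →
      (T ℝ ((2 * ν + 2 - l : ℕ) : ℤ)).eval (Real.cos θ) = (T ℝ l).eval (Real.cos θ) := by
    intro l hl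
    rw [T_real_cos, T_real_cos]
    have h2 : (((2 * ν + 2 - l : ℕ) : ℤ) : ℝ) * θ = (m : ℝ) * (2 * π) - (l : ℝ) * θ := by
      rw [hθ]
      have : (((2 * ν + 2 - l : ℕ) : ℤ) : ℝ) = 2 * (ν : ℝ) + 2 - l := by push_cast [hl]; ring
      rw [this]
      field_simp
    have hc : Real.cos ((m : ℝ) * (2 * π)) = 1 := Real.cos_nat_mul_two_pi m
    have hs : Real.sin ((m : ℝ) * (2 * π)) = 0 := by
      have : (m : ℝ) * (2 * π) = ((2 * m : ℕ) : ℝ) * π := by push_cast; ring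
      rw [this]; exact Real.sin_nat_mul_pi _
    rw [h2, Real.cos_sub, hc, hs]
    push_cast
    ring_nf
  have hfin : ∀ k ∉ range (2 * ν + 2), (T ℝ k).eval (Real.cos θ) * B k n = 0 := by
    intro k hk
    rw [mem_range, not_lt] at hk
    rw [hB0 k (by omega), mul_zero]
  rw [tsum_eq_sum hfin]
  rw [show 2 * ν + 2 = (ν + 2) + ν by ring, Finset.sum_range_add]
  have key : ∀ i ∈ range ν,
      (T ℝ ((ν + 2 + i : ℕ) : ℤ)).eval (Real.cos θ) * B (ν + 2 + i) n
        = (T ℝ ((ν - i : ℕ) : ℤ)).eval (Real.cos θ) * B (2 * ν + 2 - (ν - i)) n := by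
    intro i hi
    rw [mem_range] at hi
    have h1 : 2 * ν + 2 - (ν - i) = ν + 2 + i := by omega
    have h2 : ν + 2 + i = 2 * ν + 2 - (ν - i) := by omega
    rw [h1]
    congr 1
    rw [h2]
    exact hrefl (ν - i) (by omega)
  rw [Finset.sum_congr rfl key]
  have hsecond : ∑ i ∈ range ν,
      (T ℝ ((ν - i : ℕ) : ℤ)).eval (Real.cos θ) * B (2 * ν + 2 - (ν - i)) n
      = ∑ l ∈ Finset.Icc 1 ν, (T ℝ (l : ℤ)).eval (Real.cos θ) * B (2 * ν + 2 - l) n := by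
    apply Finset.sum_nbij' (fun i => ν - i) (fun l => ν - l)
    · intro a ha; rw [mem_range] at ha; simp [Finset.mem_Icc]; omega
    · intro b hb; rw [Finset.mem_Icc] at hb; simp; omega
    · intro a ha; rw [mem_range] at ha; omega
    · intro b hb; rw [Finset.mem_Icc] at hb; omega
    · intro a ha; rfl
  rw [hsecond]
  have step1 : ∀ l ∈ Finset.Icc 1 ν,
      (T ℝ (l : ℤ)).eval (Real.cos θ) * B (2 * ν + 2 - l) n
        = (fun l : ℕ => if ν - d ≤ l ∧ l ≤ ν then
            (T ℝ (l : ℤ)).eval (Real.cos θ) * B (2 * ν + 2 - l) n else 0) l := by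
    intro l hl
    rw [Finset.mem_Icc] at hl
    simp only
    split_ifs with h
    · rfl
    · rw [hB0 (2 * ν + 2 - l) (by omega), mul_zero]
  have hsecond2 : ∑ l ∈ Finset.Icc 1 ν,
      (T ℝ (l : ℤ)).eval (Real.cos θ) * B (2 * ν + 2 - l) n
      = ∑ l ∈ range (ν + 2), (if ν - d ≤ l ∧ l ≤ ν then
          (T ℝ (l : ℤ)).eval (Real.cos θ) * B (2 * ν + 2 - l) n else 0) := by
    rw [Finset.sum_congr rfl step1]
    apply Finset.sum_subset
    · intro x hx; rw [Finset.mem_Icc] at hx; rw [mem_range]; omega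
    · intro x hx hx'
      rw [mem_range] at hx; rw [Finset.mem_Icc] at hx'
      exact if_neg (by omega)
  rw [hsecond2]
  have hsplit : ∀ k ∈ range (ν + 2),
      (T ℝ (k : ℤ)).eval (Real.cos θ) * Bt k n
        = (fun k : ℕ => (T ℝ (k : ℤ)).eval (Real.cos θ) * B k n
            + (if ν - d ≤ k ∧ k ≤ ν then
                (T ℝ (k : ℤ)).eval (Real.cos θ) * B (2 * ν + 2 - k) n else 0)) k := by
    intro k hk
    rw [mem_range] at hk
    simp only
    by_cases h1 : k < ν - d
    · rw [hBt1 k n (Or.inl h1), if_neg (by omega), add_zero]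
    · by_cases h2 : k ≤ ν
      · rw [hBt2 k n (by omega) h2, if_pos ⟨by omega, h2⟩, mul_add]
      · rw [hBt1 k n (Or.inr (by omega)), if_neg (by omega), add_zero]
  rw [Finset.sum_congr rfl hsplit, Finset.sum_add_distrib]
end
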